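/- (Thicket Sauer-Shelah lemma) Let (X,𝓕) be a set system with thicket dimension at most k (k a natural number). Then for every n, the thicket shatter function satisfies ρ(n) ≤ ∑_{i=0}^{k} C(n,i), where ρ(n) is the maximum number of realized leaves over 𝓕 in any X-labeled complete balanced binary tree of depth n. -/

import Mathlib

/-- A leaf `v` (a binary string) of an `X`-labeled tree with labeling `lab` is
realized by `F` if, for every proper prefix `u` of `v`, the label of `u` lies
in `F` iff the bit of `v` following `u` is `false` (left). -/
def RealizedBy {X : Type*} (lab : List Bool → X) (v : List Bool) (F : Set X) : Prop :=
  ∀ i : Fin v.length, (lab (v.take i) ∈ F ↔ v.get i = false)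

/-- There is a full `X`-labeled complete balanced binary tree of depth `n` over `𝓕`:
a labeling of strings (internal vertices are those of length `< n`) such that every
leaf (string of length `n`) is realized by some member of `𝓕`. -/
def FullTree {X : Type*} (𝓕 : Set (Set X)) (n : ℕ) : Prop :=
  ∃ lab : List Bool → X, ∀ v : List Bool, v.length = n → ∃ F ∈ 𝓕, RealizedBy lab v F

/-- The thicket dimension: the supremum of depths of full trees, with value `⊥`
(representing `-1`) for the empty family and `⊤` (representing `ω`) when there
are arbitrarily deep full trees. -/
noncomputable def thicketDim {X : Type*} (𝓕 : Set (Set X)) : WithBot ℕ∞ :=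
  sSup {d : WithBot ℕ∞ | ∃ n : ℕ, FullTree 𝓕 n ∧ d = ((n : ℕ∞) : WithBot ℕ∞)}

/-- The thicket shatter function `ρ(n)`: the maximum, over all `X`-labelings,
of the number of leaves of the complete balanced binary tree of depth `n`
realized over `𝓕`. -/
noncomputable def shatterFn {X : Type*} (𝓕 : Set (Set X)) (n : ℕ) : ℕ∞ :=
  ⨆ lab : List Bool → X,
    (Nat.card {v : Fin n → Bool // ∃ F ∈ 𝓕, RealizedBy lab (List.ofFn v) F} : ℕ∞)

lemma realizedBy_cons {X : Type*} (lab : List Bool → X) (b : Bool) (l : List Bool)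
    (F : Set X) :
    RealizedBy lab (b :: l) F ↔
      ((lab [] ∈ F ↔ b = false) ∧ RealizedBy (fun u => lab (b :: u)) l F) := by
  constructor
  · intro h
    refine ⟨by simpa using h ⟨0, by simp⟩, fun j => ?_⟩
    have := h ⟨j + 1, by simpa using Nat.succ_lt_succ j.isLt⟩
    simpa using this
  · rintro ⟨h0, h⟩ i
    obtain ⟨iv, hi⟩ := i
    match iv with
    | 0 => simpa using h0
    | j + 1 =>
      have hj : j < l.length := by simpa using hi
      simpa using h ⟨j, hj⟩

lemma fullTree_mono {X : Type*} {𝓕 𝓖 : Set (Set X)} (h : 𝓕 ⊆ 𝓖) {m : ℕ}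
    (hf : FullTree 𝓕 m) : FullTree 𝓖 m := by
  obtain ⟨lab, hlab⟩ := hf
  exact ⟨lab, fun v hv => by obtain ⟨F, hF, hr⟩ := hlab v hv; exact ⟨F, h hF, hr⟩⟩

lemma fullTree_combine {X : Type*} (𝓕 : Set (Set X)) (x : X) {m : ℕ}
    (h0 : FullTree {F | F ∈ 𝓕 ∧ x ∈ F} m)
    (h1 : FullTree {F | F ∈ 𝓕 ∧ x ∉ F} m) :
    FullTree 𝓕 (m + 1) := by
  obtain ⟨lab0, hlab0⟩ := h0
  obtain ⟨lab1, hlab1⟩ := h1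
  refine ⟨fun l => match l with
    | [] => x
    | (b :: u) => if b then lab1 u else lab0 u, ?_⟩
  intro v hv
  match v with
  | [] => simp at hv
  | (b :: w) =>
    have hw : w.length = m := by simpa using hv
    cases b with
    | false =>
      obtain ⟨F, hF, hr⟩ := hlab0 w hw
      exact ⟨F, hF.1, (realizedBy_cons _ _ _ _).mpr ⟨by simpa using hF.2, hr⟩⟩
    | true =>
      obtain ⟨F, hF, hr⟩ := hlab1 w hw
      exact ⟨F, hF.1, (realizedBy_cons _ _ _ _).mpr ⟨by simpa using hF.2, hr⟩⟩

lemma pascal_sum (n k : ℕ) :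
    ∑ i ∈ Finset.range (k + 1), (n + 1).choose i =
      ∑ i ∈ Finset.range (k + 1), n.choose i + ∑ i ∈ Finset.range k, n.choose i := by
  induction k with
  | zero => simp
  | succ k ih =>
    rw [Finset.sum_range_succ, ih, Nat.choose_succ_succ,
      Finset.sum_range_succ (fun i => n.choose i) (k + 1),
      Finset.sum_range_succ (fun i => n.choose i) k]
    simp only [Nat.succ_eq_add_one]
    omega

lemma key_count {X : Type*} : ∀ (n k : ℕ) (𝓕 : Set (Set X)) (lab : List Bool → X),
    ¬ FullTree 𝓕 k →
    Nat.card {v : Fin n → Bool // ∃ F ∈ 𝓕, RealizedBy lab (List.ofFn v) F} ≤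
      ∑ i ∈ Finset.range k, n.choose i := by
  intro n
  induction n with
  | zero =>
    intro k 𝓕 lab hk
    match k with
    | 0 =>
      have : IsEmpty {v : Fin 0 → Bool // ∃ F ∈ 𝓕, RealizedBy lab (List.ofFn v) F} := by
        refine ⟨?_⟩
        rintro ⟨v, F, hF, -⟩
        exact hk ⟨lab, fun w hw => ⟨F, hF, fun i => absurd i.2 (by omega)⟩⟩
      rw [Nat.card_of_isEmpty]
      exact Nat.zero_le _
    | k + 1 =>
      calc Nat.card {v : Fin 0 → Bool // ∃ F ∈ 𝓕, RealizedBy lab (List.ofFn v) F}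
          ≤ Nat.card (Fin 0 → Bool) :=
            Nat.card_le_card_of_injective _ Subtype.val_injective
        _ = 1 := by simp [Nat.card_eq_fintype_card]
        _ ≤ _ := by
            rw [Finset.sum_range_succ']
            simp
  | succ n ih =>
    intro k 𝓕 lab hk
    match k with
    | 0 =>
      have : IsEmpty {v : Fin (n+1) → Bool // ∃ F ∈ 𝓕, RealizedBy lab (List.ofFn v) F} := by
        refine ⟨?_⟩
        rintro ⟨v, F, hF, -⟩
        exact hk ⟨lab, fun w hw => ⟨F, hF, fun i => absurd i.2 (by omega)⟩⟩
      rw [Nat.card_of_isEmpty]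
      exact Nat.zero_le _
    | k + 1 =>
      set x := lab []
      set 𝓕₀ : Set (Set X) := {F | F ∈ 𝓕 ∧ x ∈ F} with h𝓕₀
      set 𝓕₁ : Set (Set X) := {F | F ∈ 𝓕 ∧ x ∉ F} with h𝓕₁
      set lab0 : List Bool → X := fun u => lab (false :: u) with hlab0
      set lab1 : List Bool → X := fun u => lab (true :: u) with hlab1
      -- the injection into the sum
      have hsplit :
          Nat.card {v : Fin (n+1) → Bool // ∃ F ∈ 𝓕, RealizedBy lab (List.ofFn v) F} ≤
            Nat.card {v : Fin n → Bool // ∃ F ∈ 𝓕₀, RealizedBy lab0 (List.ofFn v) F} +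
            Nat.card {v : Fin n → Bool // ∃ F ∈ 𝓕₁, RealizedBy lab1 (List.ofFn v) F} := by
        rw [← Nat.card_sum]
        refine Nat.card_le_card_of_injective (fun p => ?_) ?_
        · obtain ⟨v, hv⟩ := p
          by_cases h : v 0 = false
          · refine Sum.inl ⟨fun i => v i.succ, ?_⟩
            obtain ⟨F, hF, hr⟩ := hv
            rw [List.ofFn_succ, realizedBy_cons] at hr
            rw [h] at hr
            exact ⟨F, ⟨hF, hr.1.mpr rfl⟩, hr.2⟩
          · refine Sum.inr ⟨fun i => v i.succ, ?_⟩
            obtain ⟨F, hF, hr⟩ := hv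
            have h' : v 0 = true := by simpa using h
            rw [List.ofFn_succ, realizedBy_cons] at hr
            rw [h'] at hr
            exact ⟨F, ⟨hF, fun hx => by simpa using hr.1.mp hx⟩, hr.2⟩
        · rintro ⟨v, hv⟩ ⟨w, hw⟩ h
          simp only at h
          have key : (fun i : Fin n => v i.succ) = (fun i : Fin n => w i.succ) ∧ v 0 = w 0 := by
            split_ifs at h with h1 h2 h2
            · simp only [Sum.inl.injEq, Subtype.mk.injEq] at h
              exact ⟨h, h1.trans h2.symm⟩
            · simp only [Sum.inr.injEq, Subtype.mk.injEq] at h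
              simp only [Bool.not_eq_false] at h1 h2
              exact ⟨h, h1.trans h2.symm⟩
          refine Subtype.ext (funext fun i => ?_)
          show v i = w i
          refine Fin.cases key.2 (fun j => congrFun key.1 j) i
      have hnot : ¬ FullTree 𝓕₀ k ∨ ¬ FullTree 𝓕₁ k := by
        by_contra hcon
        push_neg at hcon
        exact hk (fullTree_combine 𝓕 x hcon.1 hcon.2)
      have hm0 : ¬ FullTree 𝓕₀ (k + 1) := fun h =>
        hk (fullTree_mono (fun F hF => hF.1) h)
      have hm1 : ¬ FullTree 𝓕₁ (k + 1) := fun h =>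
        hk (fullTree_mono (fun F hF => hF.1) h)
      rw [pascal_sum]
      rcases hnot with h0 | h1
      · calc _ ≤ _ := hsplit
          _ ≤ ∑ i ∈ Finset.range k, n.choose i + ∑ i ∈ Finset.range (k+1), n.choose i :=
              Nat.add_le_add (ih k 𝓕₀ lab0 h0) (ih (k+1) 𝓕₁ lab1 hm1)
          _ = _ := Nat.add_comm _ _
      · calc _ ≤ _ := hsplit
          _ ≤ ∑ i ∈ Finset.range (k+1), n.choose i + ∑ i ∈ Finset.range k, n.choose i :=
              Nat.add_le_add (ih (k+1) 𝓕₀ lab0 hm0) (ih k 𝓕₁ lab1 h1)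

/-- Thicket Sauer-Shelah lemma: if the thicket dimension of `(X,𝓕)` is at most
`k`, then `ρ(n) ≤ ∑_{i=0}^{k} C(n,i)` for every `n`. -/
theorem thicket_sauer_shelah {X : Type*} (𝓕 : Set (Set X)) (k : ℕ)
    (hdim : thicketDim 𝓕 ≤ ((k : ℕ∞) : WithBot ℕ∞)) (n : ℕ) :
    shatterFn 𝓕 n ≤ ((∑ i ∈ Finset.range (k + 1), n.choose i : ℕ) : ℕ∞) := by
  have hnf : ¬ FullTree 𝓕 (k + 1) := by
    intro hft
    have hmem : (((k + 1 : ℕ) : ℕ∞) : WithBot ℕ∞) ∈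
        {d : WithBot ℕ∞ | ∃ n : ℕ, FullTree 𝓕 n ∧ d = ((n : ℕ∞) : WithBot ℕ∞)} :=
      ⟨k + 1, hft, rfl⟩
    have h1 : (((k + 1 : ℕ) : ℕ∞) : WithBot ℕ∞) ≤ ((k : ℕ∞) : WithBot ℕ∞) :=
      le_trans (le_sSup hmem) hdim
    simp only [WithBot.coe_le_coe, Nat.cast_le] at h1
    omega
  rw [shatterFn]
  refine iSup_le fun lab => ?_
  exact_mod_cast key_count n (k + 1) 𝓕 lab hnf
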